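/- Let Z be the Randers norm with Zermelo data (⟨·,·⟩, W) on a finite-dimensional real inner product space V, where ‖W‖ < 1. Then for every v ≠ 0 and every u ∈ V, the Fréchet derivative of Z at v satisfies dZ_v(u) = ⟨v − Z(v)W, u⟩ / (Z(v) + ⟨v − Z(v)W, W⟩), where the denominator Z(v) + ⟨v − Z(v)W, W⟩ is strictly positive; consequently the fundamental tensor satisfies g_v(v,u) = Z(v)·⟨v − Z(v)W, u⟩ / (Z(v) + ⟨v − Z(v)W, W⟩). -/

import Mathlib

open scoped RealInnerProductSpace
open Classical

/-- The Randers norm with Zermelo data `(⟪·,·⟫, W)` on a real inner product space: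
`Z(0) = 0` and, for `v ≠ 0`,
`Z(v) = (√(⟪W,v⟫² + (1 − ‖W‖²)‖v‖²) − ⟪W,v⟫)/(1 − ‖W‖²)`. -/
noncomputable def randers {V : Type*} [NormedAddCommGroup V] [InnerProductSpace ℝ V]
    (W : V) (v : V) : ℝ :=
  if v = 0 then 0
  else (Real.sqrt (⟪W, v⟫ ^ 2 + (1 - ‖W‖ ^ 2) * ‖v‖ ^ 2) - ⟪W, v⟫) / (1 - ‖W‖ ^ 2)

/-- The fundamental tensor of a (Minkowski) norm `F` at the point `v`, evaluated on the
pair of vectors `(u, w)`: one half of the second Fréchet derivative of `F²` at `v`. -/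
noncomputable def fundamentalTensor {V : Type*} [NormedAddCommGroup V] [NormedSpace ℝ V]
    (F : V → ℝ) (v u w : V) : ℝ :=
  (1 / 2) * iteratedFDeriv ℝ 2 (fun x => F x ^ 2) v ![u, w]

/-- Derivative of the Randers norm: for `v ≠ 0`,
`dZ_v(u) = ⟪v − Z(v)W, u⟫ / (Z(v) + ⟪v − Z(v)W, W⟫)` with strictly positive denominator,
and consequently `g_v(v,u) = Z(v)·⟪v − Z(v)W, u⟫ / (Z(v) + ⟪v − Z(v)W, W⟫)`. -/
theorem randers_fderiv_and_fundamentalTensor {V : Type*} [NormedAddCommGroup V]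
    [InnerProductSpace ℝ V] [FiniteDimensional ℝ V] (W : V) (hW : ‖W‖ < 1)
    (v : V) (hv : v ≠ 0) (u : V) :
    0 < randers W v + ⟪v - randers W v • W, W⟫ ∧
      fderiv ℝ (randers W) v u =
        ⟪v - randers W v • W, u⟫ / (randers W v + ⟪v - randers W v • W, W⟫) ∧
      fundamentalTensor (randers W) v v u =
        randers W v * ⟪v - randers W v • W, u⟫ / (randers W v + ⟪v - randers W v • W, W⟫) := by
  have hc : (0:ℝ) < 1 - ‖W‖ ^ 2 := by nlinarith [norm_nonneg W]
  set c : ℝ := 1 - ‖W‖ ^ 2 with hc_def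
  set g : V → ℝ := fun x => (Real.sqrt (⟪W, x⟫ ^ 2 + c * ‖x‖ ^ 2) - ⟪W, x⟫) / c with hg_def
  have hDpos : ∀ x : V, x ≠ 0 → 0 < ⟪W, x⟫ ^ 2 + c * ‖x‖ ^ 2 := by
    intro x hx
    have h1 : 0 < ‖x‖ := norm_pos_iff.mpr hx
    have h2 : 0 < c * ‖x‖ ^ 2 := by positivity
    nlinarith [sq_nonneg ⟪W, x⟫]
  -- randers agrees with g near nonzero points
  have hEv : ∀ x : V, x ≠ 0 → randers W =ᶠ[nhds x] g := by
    intro x hx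
    filter_upwards [eventually_ne_nhds hx] with y hy
    simp only [randers, if_neg hy, hg_def, ← hc_def]
  -- smoothness of g away from 0
  have hinner : ContDiff ℝ 2 fun y : V => ⟪W, y⟫ := contDiff_const.inner ℝ contDiff_id
  have hg_cd : ∀ x : V, x ≠ 0 → ContDiffAt ℝ 2 g x := by
    intro x hx
    have hDcd : ContDiffAt ℝ 2 (fun y : V => ⟪W, y⟫ ^ 2 + c * ‖y‖ ^ 2) x :=
      ((hinner.pow 2).add (contDiff_const.mul (contDiff_norm_sq ℝ))).contDiffAt
    have hs : ContDiffAt ℝ 2 Real.sqrt (⟪W, x⟫ ^ 2 + c * ‖x‖ ^ 2) :=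
      Real.contDiffAt_sqrt (hDpos x hx).ne'
    exact ((hs.comp x hDcd).sub hinner.contDiffAt).div_const c
  have hg_d : ∀ x : V, x ≠ 0 → DifferentiableAt ℝ g x := fun x hx =>
    (hg_cd x hx).differentiableAt (by norm_num)
  -- G = g^2 written as a product
  set G : V → ℝ := fun x => g x * g x with hG_def
  have hG_d : ∀ x : V, x ≠ 0 → DifferentiableAt ℝ G x := fun x hx =>
    (hg_d x hx).mul (hg_d x hx)
  -- homogeneity of g
  have hg_hom : ∀ t : ℝ, 0 ≤ t → ∀ x : V, g (t • x) = t * g x := by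
    intro t ht x
    simp only [hg_def]
    rw [real_inner_smul_right, norm_smul, Real.norm_eq_abs, mul_pow, mul_pow, sq_abs]
    have h3 : t ^ 2 * ⟪W, x⟫ ^ 2 + c * (t ^ 2 * ‖x‖ ^ 2)
        = t ^ 2 * (⟪W, x⟫ ^ 2 + c * ‖x‖ ^ 2) := by ring
    rw [h3, Real.sqrt_mul (sq_nonneg t), Real.sqrt_sq ht]
    ring
  have hG_hom : ∀ t : ℝ, 0 ≤ t → ∀ x : V, G (t • x) = t ^ 2 * G x := by
    intro t ht x
    simp only [hG_def, hg_hom t ht x]; ring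
  -- homogeneity of the derivative of G
  have hfd_hom : ∀ t : ℝ, 0 < t → ∀ w : V, fderiv ℝ G (t • v) w = t * fderiv ℝ G v w := by
    intro t ht w
    have htv : t • v ≠ 0 := smul_ne_zero ht.ne' hv
    have h1 : HasFDerivAt (fun x : V => G (t • x))
        ((fderiv ℝ G (t • v)).comp (t • ContinuousLinearMap.id ℝ V)) v :=
      ((hG_d _ htv).hasFDerivAt).comp v ((hasFDerivAt_id v).const_smul t)
    have h2 : HasFDerivAt (fun x : V => G (t • x)) (t ^ 2 • fderiv ℝ G v) v := by
      have h3 : (fun x : V => G (t • x)) = fun x => t ^ 2 * G x :=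
        funext fun x => hG_hom t ht.le x
      rw [h3]
      exact ((hG_d v hv).hasFDerivAt).const_mul (t ^ 2)
    have h4 := h1.unique h2
    have h5 := congrArg (fun L : V →L[ℝ] ℝ => L w) h4
    simp only [ContinuousLinearMap.comp_apply, ContinuousLinearMap.smul_apply,
      ContinuousLinearMap.coe_smul', Pi.smul_apply, ContinuousLinearMap.id_apply,
      smul_eq_mul, map_smul] at h5
    have ht0 : t ≠ 0 := ht.ne'
    apply mul_left_cancel₀ ht0
    linear_combination h5
  -- abbreviations
  have hgv : randers W v = g v := by simp only [randers, if_neg hv, hg_def, ← hc_def]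
  set a : ℝ := ⟪W, v⟫ with ha_def
  set S : ℝ := Real.sqrt (⟪W, v⟫ ^ 2 + c * ‖v‖ ^ 2) with hS_def
  have hSpos : 0 < S := Real.sqrt_pos.mpr (hDpos v hv)
  have hS2 : S ^ 2 = a ^ 2 + c * ‖v‖ ^ 2 := Real.sq_sqrt (hDpos v hv).le
  have hZval : g v = (S - a) / c := rfl
  have hZc : g v * c = S - a := by rw [hZval]; field_simp
  -- denominator identity
  have hDen : randers W v + ⟪v - randers W v • W, W⟫ = S := by
    rw [hgv, inner_sub_left, real_inner_smul_left, real_inner_comm W v,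
      real_inner_self_eq_norm_sq]
    have : ‖W‖ ^ 2 = 1 - c := by rw [hc_def]; ring
    rw [this]
    nlinarith [hZc]
  -- the directional derivative of g at v
  set au : ℝ := ⟪W, u⟫ with hau_def
  set ip : ℝ := ⟪v, u⟫ with hip_def
  have hval : fderiv ℝ g v u = (ip - g v * au) / S := by
    set q : ℝ → ℝ := fun t => (a + t * au) ^ 2 + c * (‖v‖ ^ 2 + t * (2 * ip) + t ^ 2 * ‖u‖ ^ 2)
      with hq_def
    have hq0 : q 0 = a ^ 2 + c * ‖v‖ ^ 2 := by simp [hq_def]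
    have hA : HasDerivAt (fun t : ℝ => a + t * au) au 0 := (hasDerivAt_mul_const au).const_add a
    have hB : HasDerivAt (fun t : ℝ => ‖v‖ ^ 2 + t * (2 * ip) + t ^ 2 * ‖u‖ ^ 2)
        (2 * ip + 2 * (0:ℝ) ^ 1 * ‖u‖ ^ 2) 0 := by
      exact ((hasDerivAt_mul_const (2 * ip)).const_add (‖v‖ ^ 2)).add
        ((hasDerivAt_pow 2 (0:ℝ)).mul_const (‖u‖ ^ 2))
    have hq : HasDerivAt q (2 * (a + 0 * au) ^ 1 * au + c * (2 * ip + 2 * (0:ℝ) ^ 1 * ‖u‖ ^ 2))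
        0 := (hA.pow 2).add (hB.const_mul c)
    have hq0ne : q 0 ≠ 0 := by rw [hq0]; exact (hDpos v hv).ne'
    have hsq : HasDerivAt (fun t => Real.sqrt (q t))
        (1 / (2 * Real.sqrt (q 0)) *
          (2 * (a + 0 * au) ^ 1 * au + c * (2 * ip + 2 * (0:ℝ) ^ 1 * ‖u‖ ^ 2))) 0 :=
      (Real.hasDerivAt_sqrt hq0ne).comp 0 hq
    have htotal : HasDerivAt (fun t => (Real.sqrt (q t) - (a + t * au)) / c)
        ((1 / (2 * Real.sqrt (q 0)) *
          (2 * (a + 0 * au) ^ 1 * au + c * (2 * ip + 2 * (0:ℝ) ^ 1 * ‖u‖ ^ 2)) - au) / c) 0 :=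
      (hsq.sub hA).div_const c
    have h_eq : (fun t : ℝ => g (v + t • u)) = fun t => (Real.sqrt (q t) - (a + t * au)) / c := by
      funext t
      simp only [hg_def, hq_def]
      have e1 : ⟪W, v + t • u⟫ = a + t * au := by
        rw [inner_add_right, real_inner_smul_right, ha_def, hau_def]
      have e2 : ‖v + t • u‖ ^ 2 = ‖v‖ ^ 2 + t * (2 * ip) + t ^ 2 * ‖u‖ ^ 2 := by
        rw [@norm_add_sq_real V, real_inner_smul_right, norm_smul, Real.norm_eq_abs,
          mul_pow, sq_abs, hip_def]
        ring
      rw [e1, e2]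
    have hline0 : HasDerivAt (fun t : ℝ => v + t • u) u 0 := by
      simpa using ((hasDerivAt_id (0:ℝ)).smul_const u).const_add v
    have hg_at : HasFDerivAt g (fderiv ℝ g v) (v + (0:ℝ) • u) := by
      rw [zero_smul, add_zero]; exact (hg_d v hv).hasFDerivAt
    have hgd : HasDerivAt (fun t : ℝ => g (v + t • u)) (fderiv ℝ g v u) 0 :=
      (hg_at.comp_hasDerivAt 0 hline0 :)
    rw [h_eq] at hgd
    have huniq := hgd.unique htotal
    rw [huniq, hq0, ← hS_def]
    rw [hZval]
    field_simp
    ring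
  -- first conjunct
  have hpos : 0 < randers W v + ⟪v - randers W v • W, W⟫ := by rw [hDen]; exact hSpos
  have hnum : ⟪v - randers W v • W, u⟫ = ip - g v * au := by
    rw [hgv, inner_sub_left, real_inner_smul_left, hip_def, hau_def]
  refine ⟨hpos, ?_, ?_⟩
  · rw [(hEv v hv).fderiv_eq, hval, hnum, hDen]
  · -- second derivative part
    have hG_cd2 : ContDiffAt ℝ 2 G v := (hg_cd v hv).mul (hg_cd v hv)
    have hfd_diff : DifferentiableAt ℝ (fderiv ℝ G) v := by
      have h := hG_cd2.fderiv_right (m := 1) (le_refl _)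
      exact h.differentiableAt (by norm_num)
    set ψ : V → ℝ := fun x => fderiv ℝ G x u with hψ_def
    have hψ_diff : DifferentiableAt ℝ ψ v := hfd_diff.clm_apply (differentiableAt_const u)
    have hψ_fd : fderiv ℝ ψ v v = fderiv ℝ (fderiv ℝ G) v v u := by
      rw [hψ_def, fderiv_clm_apply hfd_diff (differentiableAt_const u)]
      simp
    -- derivative along the ray
    have hline : HasDerivAt (fun t : ℝ => t • v) v 1 := by
      simpa using (hasDerivAt_id (1:ℝ)).smul_const v
    have hψ' : HasFDerivAt ψ (fderiv ℝ ψ v) ((1:ℝ) • v) := by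
      rw [one_smul]; exact hψ_diff.hasFDerivAt
    have hF : HasDerivAt (fun t : ℝ => ψ (t • v)) (fderiv ℝ ψ v v) 1 :=
      (hψ'.comp_hasDerivAt 1 hline :)
    have hF' : HasDerivAt (fun t : ℝ => ψ (t • v)) (ψ v) 1 := by
      refine (hasDerivAt_mul_const (ψ v)).congr_of_eventuallyEq ?_
      filter_upwards [eventually_gt_nhds (zero_lt_one)] with t ht
      exact hfd_hom t ht u
    have hkey : fderiv ℝ ψ v v = ψ v := hF.unique hF'
    -- value of ψ v
    have hmul := ((hg_d v hv).hasFDerivAt.mul (hg_d v hv).hasFDerivAt).fderiv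
    have hψv : ψ v = 2 * g v * fderiv ℝ g v u := by
      rw [hψ_def]
      show fderiv ℝ G v u = _
      rw [hG_def, show (fun x => g x * g x) = g * g from rfl, hmul]
      simp only [ContinuousLinearMap.add_apply, ContinuousLinearMap.smul_apply, smul_eq_mul]
      ring
    -- put everything together
    have hiter : iteratedFDeriv ℝ 2 (fun x => randers W x ^ 2) v ![v, u]
        = fderiv ℝ (fderiv ℝ G) v v u := by
      rw [iteratedFDeriv_two_apply]
      have hEv2 : (fun x => randers W x ^ 2) =ᶠ[nhds v] G := by
        filter_upwards [hEv v hv] with y hy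
        simp only [hy, hG_def]; ring
      rw [hEv2.fderiv.fderiv_eq]
      rfl
    rw [fundamentalTensor, hiter, ← hψ_fd, hkey, hψv, hval, hnum, hDen, hgv]
    ring
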